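/- Let D be a continuous discount function satisfying the extended one-switch property. Then either there exist a, b, c > 0 with a ≤ b/c + 1 such that D(t) = a·e^{−bt} + (1 − a)·e^{−(b+c)t} for all t ≥ 0, or there exist r ≥ c ≥ 0 with r > 0 such that D(t) = (1 + ct)·e^{−rt} for all t ≥ 0. -/

import Mathlib

def IsDiscount (D : ℝ → ℝ) : Prop :=
  D 0 = 1 ∧ (∀ t, 0 ≤ t → 0 < D t) ∧ StrictAntiOn D (Set.Ici 0) ∧
    Filter.Tendsto D Filter.atTop (nhds 0)

def OneSwitchSign (Δ : ℝ → ℝ) : Prop :=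
  (∀ σ, 0 ≤ σ → 0 < Δ σ) ∨ (∀ σ, 0 ≤ σ → Δ σ < 0) ∨ (∀ σ, 0 ≤ σ → Δ σ = 0) ∨
    ∃ σs : ℝ, 0 ≤ σs ∧ (∀ σ, 0 ≤ σ → (Δ σ = 0 ↔ σ = σs)) ∧
      (∀ σ' σ'', 0 ≤ σ' → 0 ≤ σ'' →
        ((σ' < σs ∧ σ'' < σs) ∨ (σs < σ' ∧ σs < σ'')) → 0 < Δ σ' * Δ σ'') ∧
      (∀ σ' σ'', 0 ≤ σ' → σ' < σs → σs < σ'' → Δ σ' * Δ σ'' < 0)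

noncomputable def diffFn {n m : ℕ} (D : ℝ → ℝ) (t : Fin n → ℝ) (s : Fin m → ℝ)
    (v : Fin n → ℝ) (w : Fin m → ℝ) : ℝ → ℝ :=
  fun σ => (∑ i, D (t i + σ) * v i) - (∑ j, D (s j + σ) * w j)

def ExtOneSwitch (D : ℝ → ℝ) : Prop :=
  ∀ (n m : ℕ), 0 < n → 0 < m →
    ∀ (t : Fin n → ℝ) (s : Fin m → ℝ) (v : Fin n → ℝ) (w : Fin m → ℝ),
      StrictMono t → StrictMono s → (∀ i, 0 ≤ t i) → (∀ j, 0 ≤ s j) →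
      (∀ i, 0 ≤ v i) → (∀ j, 0 ≤ w j) → OneSwitchSign (diffFn D t s v w)


open Set Filter Real Topology MeasureTheory intervalIntegral

lemma strictMono3 {x y z : ℝ} (hxy : x < y) (hyz : y < z) : StrictMono ![x,y,z] := by
  intro i j hij
  fin_cases i <;> fin_cases j <;> simp_all <;> linarith

lemma zero3 {D : ℝ → ℝ} (hOS : ExtOneSwitch D) {x y z : ℝ} (hx : 0 ≤ x) (hxy : x < y)
    (hyz : y < z) (a b c : ℝ) {σ₁ σ₂ : ℝ} (h1 : 0 ≤ σ₁) (h12 : σ₁ < σ₂)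
    (e1 : a * D (x+σ₁) + b * D (y+σ₁) + c * D (z+σ₁) = 0)
    (e2 : a * D (x+σ₂) + b * D (y+σ₂) + c * D (z+σ₂) = 0) :
    ∀ σ, 0 ≤ σ → a * D (x+σ) + b * D (y+σ) + c * D (z+σ) = 0 := by
  have h2 : 0 ≤ σ₂ := le_trans h1 h12.le
  set tv : Fin 3 → ℝ := ![x,y,z] with htv
  set cv : Fin 3 → ℝ := ![a,b,c] with hcv
  have hmono : StrictMono tv := strictMono3 hxy hyz
  have htnn : ∀ i, 0 ≤ tv i := by
    intro i; fin_cases i <;> simp [tv] <;> linarith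
  have key : ∀ σ, diffFn D tv tv (fun i => max (cv i) 0) (fun i => max (-cv i) 0) σ
      = a * D (x+σ) + b * D (y+σ) + c * D (z+σ) := by
    intro σ
    simp only [diffFn, Fin.sum_univ_three, tv, cv]
    simp only [Matrix.cons_val_zero, Matrix.cons_val_one, Matrix.head_cons,
      Matrix.cons_val_two, Matrix.tail_cons]
    linear_combination D (x+σ) * (max_zero_sub_max_neg_zero_eq_self a)
      + D (y+σ) * (max_zero_sub_max_neg_zero_eq_self b)
      + D (z+σ) * (max_zero_sub_max_neg_zero_eq_self c)
  have hosw := hOS 3 3 (by norm_num) (by norm_num) tv tv (fun i => max (cv i) 0) (fun i => max (-cv i) 0) hmono hmono htnn htnn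
    (fun i => le_max_right _ _) (fun i => le_max_right _ _)
  rcases hosw with h | h | h | ⟨σs, hσs, hiff, _, _⟩
  · exact absurd (key σ₁ ▸ h σ₁ h1) (by rw [e1]; exact lt_irrefl 0)
  · exact absurd (key σ₁ ▸ h σ₁ h1) (by rw [e1]; exact lt_irrefl 0)
  · intro σ hσ; rw [← key σ]; exact h σ hσ
  · exfalso
    have z1 : σ₁ = σs := (hiff σ₁ h1).1 (by rw [key]; exact e1)
    have z2 : σ₂ = σs := (hiff σ₂ h2).1 (by rw [key]; exact e2)
    linarith

section Span
variable {D : ℝ → ℝ} {τ₀ σb : ℝ}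

noncomputable def pF (D : ℝ → ℝ) (τ₀ σb t : ℝ) : ℝ :=
  (D t * D (τ₀+σb) - D (t+σb) * D τ₀) / (D (τ₀+σb) - D τ₀ * D σb)
noncomputable def qF (D : ℝ → ℝ) (τ₀ σb t : ℝ) : ℝ :=
  (D (t+σb) - D t * D σb) / (D (τ₀+σb) - D τ₀ * D σb)

lemma two_point (hOS : ExtOneSwitch D) (hD0 : D 0 = 1) (hpos : ∀ t, 0 ≤ t → 0 < D t)
    (hτ : 0 < τ₀) (hσb : 0 < σb) (hW : D (τ₀+σb) ≠ D τ₀ * D σb)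
    {x y : ℝ} (hx : 0 ≤ x) (hxy : x < y) :
    D x * D (τ₀+y) - D y * D (τ₀+x) ≠ 0 := by
  intro hdet
  have Z := zero3 hOS (le_refl 0) hτ (by linarith : τ₀ < τ₀ + σb + 1)
    (D (τ₀+x)) (-(D x)) 0 hx hxy
    (by simp only [zero_add]; ring)
    (by simp only [zero_add]; nlinarith [hdet])
  have Z0 := Z 0 le_rfl
  have Zb := Z σb hσb.le
  simp only [zero_add, add_zero, hD0] at Z0 Zb
  have hx' := hpos x hx
  apply hW
  have h1 : D (τ₀+x) = D x * D τ₀ := by linarith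
  have h2 : D x * D (τ₀+σb) = D x * (D τ₀ * D σb) := by
    linear_combination (-1 : ℝ) * Zb + D σb * h1
  exact mul_left_cancel₀ hx'.ne' h2

lemma span (hOS : ExtOneSwitch D) (hD0 : D 0 = 1) (hpos : ∀ t, 0 ≤ t → 0 < D t)
    (hτ : 0 < τ₀) (hσb : 0 < σb) (hW : D (τ₀+σb) ≠ D τ₀ * D σb) :
    ∀ t σ, 0 ≤ t → 0 ≤ σ →
      D (t+σ) = pF D τ₀ σb t * D σ + qF D τ₀ σb t * D (τ₀+σ) := by
  have hdet : D (τ₀+σb) - D τ₀ * D σb ≠ 0 := sub_ne_zero.2 hW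
  intro t σ ht hσ
  rcases eq_or_lt_of_le ht with rfl | ht'
  · rw [pF, qF]
    simp only [zero_add, hD0]
    rw [div_mul_eq_mul_div, div_mul_eq_mul_div, ← add_div, eq_div_iff hdet]
    ring
  rcases eq_or_ne t τ₀ with htτ | htτ
  · subst htτ
    rw [pF, qF]
    field_simp
    ring
  -- generic case
  set c₀ := D τ₀ * D (t+σb) - D (τ₀+σb) * D t with hc₀
  set c₁ := D t * D σb - D (t+σb) with hc₁
  set c₂ := D (τ₀+σb) - D τ₀ * D σb with hc₂
  have key : ∀ u, 0 ≤ u → c₀ * D (0+u) + c₁ * D (τ₀+u) + c₂ * D (t+u) = 0 := by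
    have e1 : c₀ * D (0+(0:ℝ)) + c₁ * D (τ₀+0) + c₂ * D (t+0) = 0 := by
      simp only [zero_add, add_zero, hD0]; ring
    have e2 : c₀ * D (0+σb) + c₁ * D (τ₀+σb) + c₂ * D (t+σb) = 0 := by
      simp only [zero_add]; ring
    rcases lt_or_gt_of_ne htτ with h | h
    · have Z := zero3 hOS (le_refl 0) ht' h c₀ c₂ c₁ (le_refl 0) hσb
        (by linarith [e1]) (by linarith [e2])
      intro u hu; linarith [Z u hu]
    · have Z := zero3 hOS (le_refl 0) hτ h c₀ c₁ c₂ (le_refl 0) hσb e1 e2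
      exact Z
  have K := key σ hσ
  rw [zero_add] at K
  simp only [hc₀, hc₁, hc₂] at K
  rw [pF, qF, div_mul_eq_mul_div, div_mul_eq_mul_div, ← add_div, eq_comm,
    div_eq_iff hdet]
  linear_combination (-1 : ℝ) * K
end Span

lemma antiOn_of_deriv {f f' : ℝ → ℝ} {a : ℝ} (hc : ContinuousOn f (Ici a))
    (hd : ∀ t, a < t → HasDerivAt f (f' t) t) (hle : ∀ t, a < t → f' t ≤ 0) :
    AntitoneOn f (Ici a) := by
  apply antitoneOn_of_deriv_nonpos (convex_Ici a) hc
  · intro x hx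
    rw [interior_Ici] at hx
    exact ((hd x hx).differentiableAt.differentiableWithinAt)
  · intro x hx
    rw [interior_Ici] at hx
    rw [(hd x hx).deriv]
    exact hle x hx

lemma monoOn_of_deriv {f f' : ℝ → ℝ} {a : ℝ} (hc : ContinuousOn f (Ici a))
    (hd : ∀ t, a < t → HasDerivAt f (f' t) t) (hle : ∀ t, a < t → 0 ≤ f' t) :
    MonotoneOn f (Ici a) := by
  apply monotoneOn_of_deriv_nonneg (convex_Ici a) hc
  · intro x hx
    rw [interior_Ici] at hx
    exact ((hd x hx).differentiableAt.differentiableWithinAt)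
  · intro x hx
    rw [interior_Ici] at hx
    rw [(hd x hx).deriv]
    exact hle x hx

lemma const_of_deriv {f : ℝ → ℝ} {a : ℝ} (hc : ContinuousOn f (Ici a))
    (hd : ∀ t, a < t → HasDerivAt f 0 t) : ∀ t, a ≤ t → f t = f a := by
  intro t ht
  have h1 := antiOn_of_deriv (f' := fun _ => 0) hc hd (fun _ _ => le_rfl) self_mem_Ici ht ht
  have h2 := monoOn_of_deriv (f' := fun _ => 0) hc hd (fun _ _ => le_rfl) self_mem_Ici ht ht
  linarith

lemma solve_linear {f : ℝ → ℝ} {a c : ℝ} (hc : ContinuousOn f (Ici a))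
    (hd : ∀ t, a < t → HasDerivAt f (c * f t) t) :
    ∀ t, a ≤ t → f t = (f a * exp (-(c*a))) * exp (c * t) := by
  set g : ℝ → ℝ := fun t => f t * exp (-(c*t)) with hg
  have hgc : ContinuousOn g (Ici a) :=
    hc.mul ((continuous_exp.comp (continuous_const.mul continuous_id).neg).continuousOn)
  have hgd : ∀ t, a < t → HasDerivAt g 0 t := by
    intro t ht
    have h1 : HasDerivAt (fun t => exp (-(c*t))) (-c * exp (-(c*t))) t := by
      have := (Real.hasDerivAt_exp (-(c*t))).comp t
        (((hasDerivAt_id t).const_mul c).neg)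
      simpa [mul_comm, Function.comp_def] using this
    have := (hd t ht).fun_mul h1
    rw [show (0:ℝ) = c * f t * exp (-(c*t)) + f t * (-c * exp (-(c*t))) by ring]
    exact this
  intro t ht
  have := const_of_deriv hgc hgd t ht
  have hpos : (0:ℝ) < exp (-(c*t)) := exp_pos _
  have : f t * exp (-(c*t)) = f a * exp (-(c*a)) := this
  have h2 : f t * (exp (-(c*t)) * exp (c*t)) = f a * exp (-(c*a)) * exp (c*t) := by
    rw [← mul_assoc, this]
  rwa [← exp_add, neg_add_cancel, exp_zero, mul_one] at h2

lemma solve_affine_const {f : ℝ → ℝ} {a C : ℝ} (hc : ContinuousOn f (Ici a))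
    (hd : ∀ t, a < t → HasDerivAt f C t) : ∀ t, a ≤ t → f t = f a + C * (t - a) := by
  intro t ht
  have hgc : ContinuousOn (fun t => f t - C * t) (Ici a) :=
    hc.sub (continuous_const.mul continuous_id).continuousOn
  have hgd : ∀ t, a < t → HasDerivAt (fun t => f t - C * t) 0 t := by
    intro t ht
    have h := (hd t ht).sub ((hasDerivAt_id t).const_mul C)
    simp only [id_eq, mul_one, sub_self] at h
    exact h
  have := const_of_deriv hgc hgd t ht
  linarith

lemma slope_nonpos {E : ℝ → ℝ} {d : ℝ} (hE : HasDerivAt E d 0)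
    (hlt : ∀ t, 0 < t → E t < E 0) : d ≤ 0 := by
  by_contra hd
  push_neg at hd
  have hs := hasDerivAt_iff_tendsto_slope.1 hE
  have hs' : Tendsto (slope E 0) (𝓝[>] 0) (𝓝 d) :=
    hs.mono_left (nhdsWithin_mono 0 (fun x hx => ne_of_gt hx))
  have hev : ∀ᶠ t in 𝓝[>] (0:ℝ), 0 < slope E 0 t := hs'.eventually (eventually_gt_nhds hd)
  obtain ⟨t, htslope, htpos⟩ := (hev.and self_mem_nhdsWithin).exists
  have : 0 < (E t - E 0) / t := by
    simpa [slope_def_field, sub_zero] using htslope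
  have := mul_pos this htpos
  rw [div_mul_cancel₀] at this
  · linarith [hlt t htpos]
  · exact ne_of_gt htpos

lemma contOn_of_hasDeriv {f df : ℝ → ℝ} {a : ℝ} (hd : ∀ t, a ≤ t → HasDerivAt f (df t) t) :
    ContinuousOn f (Ici a) :=
  fun t ht => ((hd t ht).continuousAt).continuousWithinAt


lemma hasDerivAt_cmul (c t : ℝ) : HasDerivAt (fun u : ℝ => c * u) c t := by
  simpa using (hasDerivAt_id t).const_mul c

lemma hasDerivAt_exp_mul (c t : ℝ) :
    HasDerivAt (fun u : ℝ => exp (c*u)) (c * exp (c*t)) t := by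
  simpa [mul_comm, Function.comp_def] using (Real.hasDerivAt_exp (c*t)).comp t (hasDerivAt_cmul c t)

lemma hasDerivAt_exp_neg_mul (c t : ℝ) :
    HasDerivAt (fun u : ℝ => exp (-(c*u))) (-c * exp (-(c*t))) t := by
  simpa [neg_mul] using hasDerivAt_exp_mul (-c) t

lemma solve_inhom_ne {f : ℝ → ℝ} {a l₁ l₂ C : ℝ} (hne : l₁ ≠ l₂)
    (hd : ∀ t, a ≤ t → HasDerivAt f (l₁ * f t + C * exp (l₂ * t)) t) :
    ∃ A B, ∀ t, a ≤ t → f t = A * exp (l₁ * t) + B * exp (l₂ * t) := by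
  have hsub : l₂ - l₁ ≠ 0 := sub_ne_zero.2 hne.symm
  set B := C / (l₂ - l₁) with hB
  have hBC : C = B * (l₂ - l₁) := by rw [hB, div_mul_cancel₀ _ hsub]
  set g : ℝ → ℝ := fun t => f t - B * exp (l₂ * t) with hg
  have hgd : ∀ t, a ≤ t → HasDerivAt g (l₁ * g t) t := by
    intro t ht
    have h := (hd t ht).sub ((hasDerivAt_exp_mul l₂ t).const_mul B)
    have hx : l₁ * f t + C * exp (l₂ * t) - B * (l₂ * exp (l₂ * t)) = l₁ * g t := by
      rw [hg]; simp only
      linear_combination exp (l₂ * t) * hBC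
    rw [hx] at h
    exact h
  have key := solve_linear (contOn_of_hasDeriv hgd) (fun t ht => hgd t ht.le)
  refine ⟨g a * exp (-(l₁ * a)), B, fun t ht => ?_⟩
  have hk := key t ht
  have hgt : g t = f t - B * exp (l₂ * t) := by rw [hg]
  linarith

lemma solve_inhom_eq {f : ℝ → ℝ} {a lam C : ℝ}
    (hd : ∀ t, a ≤ t → HasDerivAt f (lam * f t + C * exp (lam * t)) t) :
    ∃ A, ∀ t, a ≤ t → f t = (A + C * t) * exp (lam * t) := by
  have hee : ∀ t : ℝ, exp (lam * t) * exp (-(lam * t)) = 1 := by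
    intro t; rw [← exp_add]; simp
  set g : ℝ → ℝ := fun t => f t * exp (-(lam * t)) with hg
  have hgd : ∀ t, a ≤ t → HasDerivAt g C t := by
    intro t ht
    have h := (hd t ht).mul (hasDerivAt_exp_neg_mul lam t)
    have hx : (lam * f t + C * exp (lam * t)) * exp (-(lam * t))
        + f t * (-lam * exp (-(lam * t))) = C := by
      have h2 := hee t
      linear_combination C * h2
    rw [hx] at h
    exact h
  have key := solve_affine_const (contOn_of_hasDeriv hgd) (fun t ht => hgd t ht.le)
  refine ⟨g a - C * a, fun t ht => ?_⟩
  have hk := key t ht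
  have hgt : g t = f t * exp (-(lam * t)) := by rw [hg]
  have h3 : f t * exp (-(lam * t)) * exp (lam * t) = (g a + C * (t - a)) * exp (lam * t) := by
    rw [← hgt, hk]
  rw [mul_assoc, mul_comm (exp (-(lam*t))), hee t, mul_one] at h3
  rw [h3]; ring

lemma second_order_real {f df : ℝ → ℝ} {α β a : ℝ} (hdisc : 0 ≤ α^2 + 4*β)
    (hd : ∀ t, a ≤ t → HasDerivAt f (df t) t)
    (hdd : ∀ t, a ≤ t → HasDerivAt df (α * df t + β * f t) t) :
    (∃ A B l₁ l₂ : ℝ, l₂ < l₁ ∧ (∀ t, a ≤ t → f t = A * exp (l₁*t) + B * exp (l₂*t)))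
    ∨ (∃ A B lam : ℝ, ∀ t, a ≤ t → f t = (A + B*t) * exp (lam*t)) := by
  have hs2 : Real.sqrt (α^2+4*β) ^ 2 = α^2+4*β := Real.sq_sqrt hdisc
  have hsnn : 0 ≤ Real.sqrt (α^2+4*β) := Real.sqrt_nonneg _
  set s := Real.sqrt (α^2+4*β) with hs
  set l₁ := (α + s)/2 with hl₁
  set l₂ := (α - s)/2 with hl₂
  have hsum : l₁ + l₂ = α := by rw [hl₁, hl₂]; ring
  have hprod : l₁ * l₂ = -β := by rw [hl₁, hl₂]; linear_combination (-1/4 : ℝ) * hs2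
  set w : ℝ → ℝ := fun t => df t - l₁ * f t with hw
  have hwd : ∀ t, a ≤ t → HasDerivAt w (l₂ * w t) t := by
    intro t ht
    have h := (hdd t ht).sub ((hd t ht).const_mul l₁)
    have hx : α * df t + β * f t - l₁ * df t = l₂ * w t := by
      rw [hw]; simp only
      linear_combination (-(df t)) * hsum + (f t) * hprod
    rw [hx] at h
    exact h
  have hwsol := solve_linear (contOn_of_hasDeriv hwd) (fun t ht => hwd t ht.le)
  set C := w a * exp (-(l₂ * a)) with hC
  have hfd : ∀ t, a ≤ t → HasDerivAt f (l₁ * f t + C * exp (l₂ * t)) t := by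
    intro t ht
    have h := hd t ht
    have hwt : w t = df t - l₁ * f t := by rw [hw]
    have hx : df t = l₁ * f t + C * exp (l₂ * t) := by
      have h2 := hwsol t ht
      linarith [h2, hwt]
    rwa [hx] at h
  rcases eq_or_lt_of_le hsnn with h0 | hslt
  · right
    have hll : l₁ = l₂ := by rw [hl₁, hl₂, ← h0]; ring
    rw [hll] at hfd
    obtain ⟨A, hA⟩ := solve_inhom_eq hfd
    exact ⟨A, C, l₂, fun t ht => by rw [hA t ht]⟩
  · left
    have hne : l₁ ≠ l₂ := by
      rw [hl₁, hl₂]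
      intro hcon
      rw [div_eq_div_iff (by norm_num) (by norm_num : (2:ℝ) ≠ 0)] at hcon
      have : s = 0 := by linarith
      rw [this] at hslt; exact absurd hslt (lt_irrefl 0)
    obtain ⟨A, B, hAB⟩ := solve_inhom_ne hne hfd
    have hlt : l₂ < l₁ := by rw [hl₁, hl₂]; linarith
    exact ⟨A, B, l₁, l₂, hlt, hAB⟩

lemma osc_contra {f df : ℝ → ℝ} {α β a : ℝ} (hdisc : α^2 + 4*β < 0)
    (hpos : ∀ t, a ≤ t → 0 < f t)
    (hd : ∀ t, a ≤ t → HasDerivAt f (df t) t)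
    (hdd : ∀ t, a ≤ t → HasDerivAt df (α * df t + β * f t) t) : False := by
  set aa := α/2 with haa
  set b2 := -(β + aa^2) with hb2
  have hb2pos : 0 < b2 := by rw [hb2, haa]; nlinarith
  set v : ℝ → ℝ := fun t => f t * exp (-(aa*t)) with hv
  set vd : ℝ → ℝ := fun t => (df t - aa * f t) * exp (-(aa*t)) with hvd
  have hvt : ∀ t, v t = f t * exp (-(aa*t)) := fun t => by rw [hv]
  have hvdt : ∀ t, vd t = (df t - aa * f t) * exp (-(aa*t)) := fun t => by rw [hvd]
  have hvpos : ∀ t, a ≤ t → 0 < v t := fun t ht => mul_pos (hpos t ht) (exp_pos _)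
  have hv' : ∀ t, a ≤ t → HasDerivAt v (vd t) t := by
    intro t ht
    have h := (hd t ht).mul (hasDerivAt_exp_neg_mul aa t)
    have hx : df t * exp (-(aa*t)) + f t * (-aa * exp (-(aa*t))) = vd t := by
      rw [hvdt]; ring
    rw [hx] at h
    exact h
  have hvd' : ∀ t, a ≤ t → HasDerivAt vd (-b2 * v t) t := by
    intro t ht
    have h := ((hdd t ht).fun_sub ((hd t ht).const_mul aa)).fun_mul (hasDerivAt_exp_neg_mul aa t)
    have hx : (α * df t + β * f t - aa * df t) * exp (-(aa*t))
        + (df t - aa * f t) * (-aa * exp (-(aa*t))) = -b2 * v t := by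
      rw [hvt, hb2, haa]; ring
    rw [hx] at h
    exact h
  have hvdanti : AntitoneOn vd (Ici a) := by
    apply antiOn_of_deriv (f' := fun t => -b2 * v t) (contOn_of_hasDeriv hvd')
      (fun t ht => hvd' t ht.le)
    intro t ht
    have := hvpos t ht.le
    nlinarith
  have hvdnn : ∀ t, a ≤ t → 0 ≤ vd t := by
    intro t₀ ht₀
    by_contra hneg
    push_neg at hneg
    have hvdneg : 0 < -vd t₀ := by linarith
    set T := t₀ + (v t₀ + 1)/(-vd t₀) with hT
    have hTdiff : (v t₀ + 1)/(-vd t₀) = T - t₀ := by rw [hT]; ring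
    have hfrac : 0 ≤ (v t₀ + 1)/(-vd t₀) :=
      div_nonneg (by linarith [hvpos t₀ ht₀]) hvdneg.le
    have hTt₀ : t₀ ≤ T := by rw [hT]; linarith
    have hphi : AntitoneOn (fun t => v t - vd t₀ * t) (Ici t₀) := by
      apply antiOn_of_deriv (f' := fun t => vd t - vd t₀)
      · exact contOn_of_hasDeriv (fun t ht => (hv' t (ht₀.trans ht)).sub (hasDerivAt_cmul (vd t₀) t))
      · exact fun t ht => (hv' t (ht₀.trans ht.le)).sub (hasDerivAt_cmul (vd t₀) t)
      · intro t ht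
        have := hvdanti (ht₀ : t₀ ∈ Ici a) (le_trans ht₀ ht.le : t ∈ Ici a) ht.le
        linarith
    have h2 := hphi (self_mem_Ici) (hTt₀ : T ∈ Ici t₀) hTt₀
    simp only at h2
    -- v T - vd t₀ * T ≤ v t₀ - vd t₀ * t₀
    have hvT : v T ≤ v t₀ + vd t₀ * (T - t₀) := by linarith [h2]
    have : vd t₀ * (T - t₀) = -(v t₀ + 1) := by
      rw [← hTdiff]
      rw [mul_div_assoc', div_eq_iff hvdneg.ne']
      ring
    rw [this] at hvT
    have := hvpos T (le_trans ht₀ hTt₀)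
    linarith
  have hvmono : MonotoneOn v (Ici a) :=
    monoOn_of_deriv (contOn_of_hasDeriv hv') (fun t ht => hv' t ht.le)
      (fun t ht => hvdnn t ht.le)
  have hvge : ∀ t, a ≤ t → v a ≤ v t :=
    fun t ht => hvmono (self_mem_Ici) (ht : t ∈ Ici a) ht
  -- ψ := vd + b2 * v a * t is antitone
  have hpsi : AntitoneOn (fun t => vd t + b2 * v a * t) (Ici a) := by
    apply antiOn_of_deriv (f' := fun t => -b2 * v t + b2 * v a)
    · exact contOn_of_hasDeriv (fun t ht => (hvd' t ht).add (hasDerivAt_cmul (b2 * v a) t))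
    · exact fun t ht => (hvd' t ht.le).add (hasDerivAt_cmul (b2 * v a) t)
    · intro t ht
      have := hvge t ht.le
      nlinarith
  set T := a + (vd a + 1)/(b2 * v a) with hT
  have hvapos : 0 < v a := hvpos a le_rfl
  have hbva : 0 < b2 * v a := mul_pos hb2pos hvapos
  have hfrac : 0 ≤ (vd a + 1)/(b2 * v a) :=
    div_nonneg (by linarith [hvdnn a le_rfl]) hbva.le
  have hTa : a ≤ T := by rw [hT]; linarith
  have h2 := hpsi (self_mem_Ici) (hTa : T ∈ Ici a) hTa
  simp only at h2
  have hx : b2 * v a * (T - a) = vd a + 1 := by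
    rw [hT]
    field_simp
    ring
  have hvdT : vd T ≤ -1 := by nlinarith [h2, hx]
  linarith [hvdnn T hTa]

section Boot
variable {D : ℝ → ℝ}

lemma hasDerivAt_shift {g : ℝ → ℝ} {d u y : ℝ} (h : HasDerivAt g d (u+y)) :
    HasDerivAt (fun t => g (t+y)) d u := by
  simpa [Function.comp_def] using h.comp u ((hasDerivAt_id u).add_const y)

lemma intInt (hcont : ContinuousOn D (Ici 0)) {a b : ℝ} (ha : 0 ≤ a) (hab : a ≤ b) :
    IntervalIntegrable D volume a b := by
  apply ContinuousOn.intervalIntegrable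
  apply hcont.mono
  rw [uIcc_of_le hab]
  exact fun x hx => le_trans ha hx.1

lemma G_deriv (hcont : ContinuousOn D (Ici 0)) {u : ℝ} (hu : 0 < u) :
    HasDerivAt (fun v => ∫ s in (0:ℝ)..v, D s) (D u) u := by
  apply intervalIntegral.integral_hasDerivAt_right (intInt hcont le_rfl hu.le)
  · exact ContinuousOn.stronglyMeasurableAtFilter isOpen_Ioi (hcont.mono Ioi_subset_Ici_self) u hu
  · exact hcont.continuousAt (Ici_mem_nhds hu)

lemma J_eq (hcont : ContinuousOn D (Ici 0)) {a ε : ℝ} (ha : 0 ≤ a) (hε : 0 ≤ ε) :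
    (∫ s in a..(a+ε), D s) = (∫ s in (0:ℝ)..(a+ε), D s) - (∫ s in (0:ℝ)..a, D s) := by
  have h := integral_add_adjacent_intervals (intInt hcont le_rfl ha)
    (intInt hcont ha (le_add_of_nonneg_right hε))
  linarith [h]

lemma J_slope (hcont : ContinuousOn D (Ici 0)) {y : ℝ} (hy : 0 ≤ y) :
    Tendsto (fun e => (∫ s in y..(y+e), D s)/e) (𝓝[>] (0:ℝ)) (𝓝 (D y)) := by
  have hF : HasDerivWithinAt (fun u => ∫ s in y..u, D s) (D y) (Ici y) y := by
    apply intervalIntegral.integral_hasDerivWithinAt_right (IntervalIntegrable.refl)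
      (t := Ioi y)
    · exact ⟨Ioi y, self_mem_nhdsWithin,
        ((hcont.mono (fun x hx => le_trans hy (le_of_lt hx))).aestronglyMeasurable
          measurableSet_Ioi)⟩
    · exact ((hcont y hy).mono (fun x hx => le_trans hy (le_of_lt hx)))
  have hslope := hasDerivWithinAt_iff_tendsto_slope.1 hF
  rw [Ici_sdiff_left] at hslope
  have hmap : Tendsto (fun e : ℝ => y + e) (𝓝[>] (0:ℝ)) (𝓝[>] y) := by
    rw [tendsto_nhdsWithin_iff]
    constructor
    · have : Tendsto (fun e : ℝ => y + e) (𝓝 0) (𝓝 (y+0)) :=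
        (continuous_const.add continuous_id).tendsto 0
      simpa using this.mono_left nhdsWithin_le_nhds
    · filter_upwards [self_mem_nhdsWithin] with e he
      simpa using (he : (0:ℝ) < e)
  have hcomp := hslope.comp hmap
  apply hcomp.congr'
  filter_upwards [self_mem_nhdsWithin] with e he
  have he' : (0:ℝ) < e := he
  simp only [Function.comp_apply, slope_def_field, intervalIntegral.integral_same]
  rw [sub_zero, add_sub_cancel_left]

lemma diff_of_rep (hcont : ContinuousOn D (Ici 0)) {ε c₁ c₂ y₁ y₂ : ℝ} (hε : 0 < ε)
    (hy₁ : 0 ≤ y₁) (hy₂ : 0 ≤ y₂)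
    (hrep : ∀ t, 0 ≤ t → D t = c₁ * (∫ s in (t+y₁)..(t+y₁+ε), D s)
      + c₂ * (∫ s in (t+y₂)..(t+y₂+ε), D s)) :
    ∃ dD ddD : ℝ → ℝ, (∀ t, 0 < t → HasDerivAt D (dD t) t) ∧
      (∀ t, 0 < t → HasDerivAt dD (ddD t) t) := by
  set dD : ℝ → ℝ := fun t => c₁ * (D (t+y₁+ε) - D (t+y₁)) + c₂ * (D (t+y₂+ε) - D (t+y₂))
    with hdD
  have hDd : ∀ t, 0 < t → HasDerivAt D (dD t) t := by
    intro t ht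
    set G : ℝ → ℝ := fun v => ∫ s in (0:ℝ)..v, D s with hG
    have hEder : HasDerivAt (fun u => c₁ * (G (u+(y₁+ε)) - G (u+y₁))
        + c₂ * (G (u+(y₂+ε)) - G (u+y₂))) (dD t) t := by
      have h1 := hasDerivAt_shift (y := y₁+ε) (u := t)
        (G_deriv hcont (by linarith : (0:ℝ) < t+(y₁+ε)))
      have h2 := hasDerivAt_shift (y := y₁) (u := t)
        (G_deriv hcont (by linarith : (0:ℝ) < t+y₁))
      have h3 := hasDerivAt_shift (y := y₂+ε) (u := t)
        (G_deriv hcont (by linarith : (0:ℝ) < t+(y₂+ε)))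
      have h4 := hasDerivAt_shift (y := y₂) (u := t)
        (G_deriv hcont (by linarith : (0:ℝ) < t+y₂))
      have h := ((h1.sub h2).const_mul c₁).add ((h3.sub h4).const_mul c₂)
      have hx : c₁ * (D (t+(y₁+ε)) - D (t+y₁)) + c₂ * (D (t+(y₂+ε)) - D (t+y₂)) = dD t := by
        rw [hdD]; ring_nf
      rw [hx] at h
      exact h
    have heq : ∀ u, 0 ≤ u → D u = c₁ * (G (u+(y₁+ε)) - G (u+y₁))
        + c₂ * (G (u+(y₂+ε)) - G (u+y₂)) := by
      intro u hu
      have e1 := J_eq hcont (by linarith : (0:ℝ) ≤ u+y₁) hε.le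
      have e2 := J_eq hcont (by linarith : (0:ℝ) ≤ u+y₂) hε.le
      have := hrep u hu
      rw [e1, e2] at this
      rw [this, hG]
      simp only
      ring_nf
    apply hEder.congr_of_eventuallyEq
    filter_upwards [Ici_mem_nhds ht] with u hu
    exact heq u hu
  refine ⟨dD, fun t => c₁ * (dD (t+y₁+ε) - dD (t+y₁)) + c₂ * (dD (t+y₂+ε) - dD (t+y₂)),
    hDd, ?_⟩
  intro t ht
  have h1 := hasDerivAt_shift (y := y₁+ε) (u := t) (hDd (t+(y₁+ε)) (by linarith))
  have h2 := hasDerivAt_shift (y := y₁) (u := t) (hDd (t+y₁) (by linarith))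
  have h3 := hasDerivAt_shift (y := y₂+ε) (u := t) (hDd (t+(y₂+ε)) (by linarith))
  have h4 := hasDerivAt_shift (y := y₂) (u := t) (hDd (t+y₂) (by linarith))
  have h := ((h1.fun_sub h2).const_mul c₁).fun_add ((h3.fun_sub h4).const_mul c₂)
  have hfun : (fun u => c₁ * (D (u+(y₁+ε)) - D (u+y₁)) + c₂ * (D (u+(y₂+ε)) - D (u+y₂)))
      = dD := by
    funext u; rw [hdD]; ring_nf
  have hval : c₁ * (dD (t+(y₁+ε)) - dD (t+y₁)) + c₂ * (dD (t+(y₂+ε)) - dD (t+y₂))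
      = c₁ * (dD (t+y₁+ε) - dD (t+y₁)) + c₂ * (dD (t+y₂+ε) - dD (t+y₂)) := by
    ring_nf
  rw [hfun, hval] at h
  exact h
end Boot

section S5
variable {D : ℝ → ℝ} {τ₀ σb : ℝ}

lemma shift_integral (hcont : ContinuousOn D (Ici 0)) {t x ε : ℝ} (ht : 0 ≤ t) (hx : 0 ≤ x)
    (hε : 0 ≤ ε) : ∫ s in (t+x)..(t+x+ε), D s = ∫ σ in x..(x+ε), D (t+σ) := by
  rw [integral_comp_add_left D t]
  congr 1
  ring

lemma A_x (hcont : ContinuousOn D (Ici 0))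
    (hspan : ∀ t σ, 0 ≤ t → 0 ≤ σ → D (t+σ) = pF D τ₀ σb t * D σ + qF D τ₀ σb t * D (τ₀+σ))
    (hτ : 0 < τ₀) {t x ε : ℝ} (ht : 0 ≤ t) (hx : 0 ≤ x) (hε : 0 < ε) :
    ∫ s in (t+x)..(t+x+ε), D s = pF D τ₀ σb t * (∫ s in x..(x+ε), D s)
      + qF D τ₀ σb t * (∫ s in (τ₀+x)..(τ₀+x+ε), D s) := by
  rw [shift_integral hcont ht hx hε.le]
  have h2 : EqOn (fun σ => D (t+σ))
      (fun σ => pF D τ₀ σb t * D σ + qF D τ₀ σb t * D (τ₀+σ)) (uIcc x (x+ε)) := by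
    intro σ hσ
    rw [uIcc_of_le (by linarith : x ≤ x+ε)] at hσ
    exact hspan t σ ht (le_trans hx hσ.1)
  rw [intervalIntegral.integral_congr h2]
  have hint1 : IntervalIntegrable (fun σ => D σ) volume x (x+ε) :=
    intInt hcont hx (by linarith)
  have hint2 : IntervalIntegrable (fun σ => D (τ₀+σ)) volume x (x+ε) := by
    apply ContinuousOn.intervalIntegrable
    apply hcont.comp (continuous_const.add continuous_id).continuousOn
    intro u hu
    rw [uIcc_of_le (by linarith : x ≤ x+ε)] at hu
    exact add_nonneg hτ.le (le_trans hx hu.1)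
  have := intervalIntegral.integral_add (hint1.const_mul (pF D τ₀ σb t))
    (hint2.const_mul (qF D τ₀ σb t))
  rw [this, intervalIntegral.integral_const_mul, intervalIntegral.integral_const_mul]
  congr 1
  rw [shift_integral hcont hτ.le hx hε.le]


lemma rep_of_span (hcont : ContinuousOn D (Ici 0)) (hD0 : D 0 = 1)
    (hτ : 0 < τ₀) (hσb : 0 < σb) (hdet : D (τ₀+σb) - D τ₀ * D σb ≠ 0)
    (hspan : ∀ t σ, 0 ≤ t → 0 ≤ σ → D (t+σ) = pF D τ₀ σb t * D σ + qF D τ₀ σb t * D (τ₀+σ)) :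
    ∃ ε c₁ c₂ : ℝ, 0 < ε ∧ ∀ t, 0 ≤ t →
      D t = c₁ * (∫ s in t..(t+ε), D s) + c₂ * (∫ s in (t+σb)..(t+σb+ε), D s) := by
  have l0 := J_slope hcont (le_refl (0:ℝ))
  have l1 := J_slope hcont hσb.le
  have l2 := J_slope hcont hτ.le
  have l3 := J_slope hcont (by linarith : (0:ℝ) ≤ τ₀+σb)
  have hprod := (l0.mul l3).sub (l2.mul l1)
  have hdL : Tendsto (fun e => ((∫ s in (0:ℝ)..(0+e), D s) * (∫ s in (τ₀+σb)..(τ₀+σb+e), D s)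
      - (∫ s in τ₀..(τ₀+e), D s) * (∫ s in σb..(σb+e), D s))/e^2) (𝓝[>] (0:ℝ))
      (𝓝 (D 0 * D (τ₀+σb) - D τ₀ * D σb)) := by
    apply hprod.congr'
    filter_upwards [self_mem_nhdsWithin] with e he
    rw [div_mul_div_comm, div_mul_div_comm, div_sub_div_same, sq]
  have hne : D 0 * D (τ₀+σb) - D τ₀ * D σb ≠ 0 := by rw [hD0, one_mul]; exact hdet
  obtain ⟨ε, hev', hεpos⟩ := ((hdL.eventually_ne hne).and self_mem_nhdsWithin).exists
  have hεpos : (0:ℝ) < ε := hεpos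
  set J0 := ∫ s in (0:ℝ)..ε, D s with hJ0
  set Jb := ∫ s in σb..(σb+ε), D s with hJb
  set Jt := ∫ s in τ₀..(τ₀+ε), D s with hJt
  set Jtb := ∫ s in (τ₀+σb)..(τ₀+σb+ε), D s with hJtb
  have hdLε : J0 * Jtb - Jt * Jb ≠ 0 := by
    intro h
    apply hev'
    show ((∫ s in (0:ℝ)..(0+ε), D s) * (∫ s in (τ₀+σb)..(τ₀+σb+ε), D s)
      - (∫ s in τ₀..(τ₀+ε), D s) * (∫ s in σb..(σb+ε), D s))/ε^2 = 0
    rw [zero_add, ← hJ0, ← hJb, ← hJt, ← hJtb, h]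
    simp
  refine ⟨ε, (Jtb - D τ₀ * Jb)/(J0 * Jtb - Jt * Jb), (D τ₀ * J0 - Jt)/(J0 * Jtb - Jt * Jb),
    hεpos, ?_⟩
  intro t ht
  have e0 := A_x hcont hspan hτ ht (le_refl (0:ℝ)) hεpos
  have eb := A_x hcont hspan hτ ht hσb.le hεpos
  simp only [add_zero, zero_add] at e0
  have eD : D t = pF D τ₀ σb t + qF D τ₀ σb t * D τ₀ := by
    have h := hspan t 0 ht le_rfl
    simpa [hD0] using h
  rw [e0, eb, eD, ← hJ0, ← hJb, ← hJt, ← hJtb]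
  rw [div_mul_eq_mul_div, div_mul_eq_mul_div, ← add_div, eq_div_iff hdLε]
  ring
end S5

lemma rep_dim1 {D : ℝ → ℝ} (hcont : ContinuousOn D (Ici 0)) (hpos : ∀ t, 0 ≤ t → 0 < D t)
    (hmul : ∀ t σ, 0 ≤ t → 0 ≤ σ → D (t+σ) = D t * D σ) :
    ∃ c₁ : ℝ, ∀ t, 0 ≤ t → D t = c₁ * (∫ s in t..(t+1), D s) := by
  have hC : 0 < ∫ s in (0:ℝ)..1, D s := by
    apply intervalIntegral_pos_of_pos_on (intInt hcont le_rfl one_pos.le)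
    · exact fun x hx => hpos x hx.1.le
    · exact one_pos
  refine ⟨(∫ s in (0:ℝ)..1, D s)⁻¹, fun t ht => ?_⟩
  have h1 : ∫ s in t..(t+1), D s = ∫ σ in (0:ℝ)..1, D (t+σ) := by
    have := shift_integral (ε := 1) hcont ht le_rfl one_pos.le
    simpa using this
  have h2 : ∫ σ in (0:ℝ)..1, D (t+σ) = D t * ∫ s in (0:ℝ)..1, D s := by
    rw [← intervalIntegral.integral_const_mul]
    apply intervalIntegral.integral_congr
    intro σ hσ
    rw [uIcc_of_le one_pos.le] at hσ
    exact hmul t σ ht hσ.1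
  rw [h1, h2]
  field_simp

lemma deriv_step {F dF A B : ℝ → ℝ} {σb K1 K2 K3 det : ℝ} (hσb : 0 ≤ σb)
    (hdF : ∀ t, 0 < t → HasDerivAt F (dF t) t)
    (hrel : ∀ t σ, 0 < t → 0 ≤ σ → F (t+σ) =
      ((F t * K1 - F (t+σb) * K2)/det) * A σ + ((F (t+σb) - F t * K3)/det) * B σ) :
    ∀ t σ, 0 < t → 0 ≤ σ → dF (t+σ) =
      ((dF t * K1 - dF (t+σb) * K2)/det) * A σ + ((dF (t+σb) - dF t * K3)/det) * B σ := by
  intro t σ ht hσ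
  have hf : HasDerivAt (fun u => F (u+σ)) (dF (t+σ)) t :=
    hasDerivAt_shift (hdF (t+σ) (by linarith))
  have hp : HasDerivAt (fun u => (F u * K1 - F (u+σb) * K2)/det)
      ((dF t * K1 - dF (t+σb) * K2)/det) t :=
    (((hdF t ht).mul_const K1).sub
      ((hasDerivAt_shift (hdF (t+σb) (by linarith))).mul_const K2)).div_const det
  have hq : HasDerivAt (fun u => (F (u+σb) - F u * K3)/det)
      ((dF (t+σb) - dF t * K3)/det) t :=
    (((hasDerivAt_shift (hdF (t+σb) (by linarith)))).sub
      ((hdF t ht).mul_const K3)).div_const det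
  have hg := (hp.mul_const (A σ)).add (hq.mul_const (B σ))
  have hfg : (fun u => F (u+σ)) =ᶠ[𝓝 t]
      (fun u => ((F u * K1 - F (u+σb) * K2)/det) * A σ + ((F (u+σb) - F u * K3)/det) * B σ) := by
    filter_upwards [Ioi_mem_nhds ht] with u hu
    exact hrel u σ hu hσ
  exact hf.unique (hg.congr_of_eventuallyEq hfg)

def Concl (D : ℝ → ℝ) : Prop :=
  ((∃ a b c : ℝ, 0 < a ∧ 0 < b ∧ 0 < c ∧ a ≤ b / c + 1 ∧
      ∀ t, 0 ≤ t → D t = a * Real.exp (-b * t) + (1 - a) * Real.exp (-(b + c) * t)) ∨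
   (∃ r c : ℝ, 0 ≤ c ∧ c ≤ r ∧ 0 < r ∧
      ∀ t, 0 ≤ t → D t = (1 + c * t) * Real.exp (-r * t)))

lemma tendsto_contra {D : ℝ → ℝ} (htend : Tendsto D atTop (𝓝 0))
    (hge : ∀ t, 1 ≤ t → (1:ℝ)/2 ≤ D t) : False := by
  have h1 : ∀ᶠ t in atTop, D t < 1/2 := htend.eventually (gt_mem_nhds (by norm_num))
  obtain ⟨t, h2, h3⟩ := (h1.and (eventually_ge_atTop 1)).exists
  linarith [hge t h3]

lemma finish_exp {D : ℝ → ℝ} (hD0 : D 0 = 1) (htend : Tendsto D atTop (𝓝 0))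
    {K lam : ℝ} (hform : ∀ t, 0 ≤ t → D t = K * exp (lam * t)) : Concl D := by
  have hK : K = 1 := by have := hform 0 le_rfl; simpa [hD0] using this.symm
  subst hK
  have hlam : lam < 0 := by
    by_contra h
    push_neg at h
    apply tendsto_contra htend
    intro t ht
    rw [hform t (by linarith), one_mul]
    have : (0:ℝ) ≤ lam * t := mul_nonneg h (by linarith)
    have := Real.one_le_exp this
    linarith
  right
  refine ⟨-lam, 0, le_rfl, by linarith, by linarith, fun t ht => ?_⟩
  rw [hform t ht, neg_neg]
  ring
  
lemma finish_poly {D : ℝ → ℝ} (hD0 : D 0 = 1) (hpos : ∀ t, 0 ≤ t → 0 < D t)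
    (hanti : StrictAntiOn D (Ici 0)) (htend : Tendsto D atTop (𝓝 0))
    {A C lam : ℝ} (hform : ∀ t, 0 ≤ t → D t = (A + C*t) * exp (lam*t)) : Concl D := by
  have hA : A = 1 := by have := hform 0 le_rfl; simp at this; rw [hD0] at this; linarith
  subst hA
  rcases eq_or_ne C 0 with hC | hC
  · exact finish_exp hD0 htend (K := 1) (fun t ht => by rw [hform t ht, hC]; ring_nf)
  have hCpos : 0 < C := by
    rcases lt_or_gt_of_ne hC with h | h
    · exfalso
      have ht0 : (0:ℝ) < -2/C := by rw [div_pos_iff]; right; constructor <;> linarith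
      have := hpos (-2/C) ht0.le
      rw [hform _ ht0.le] at this
      have h2 : 1 + C * (-2/C) = -1 := by field_simp; ring
      rw [h2] at this
      nlinarith [exp_pos (lam * (-2/C))]
    · exact h
  have hlam : lam < 0 := by
    by_contra h
    push_neg at h
    apply tendsto_contra htend
    intro t ht
    rw [hform t (by linarith)]
    have h1 : (1:ℝ) ≤ 1 + C * t := by nlinarith
    have h2 := Real.one_le_exp (mul_nonneg h (by linarith : (0:ℝ) ≤ t))
    nlinarith
  -- slope at 0
  have hE : HasDerivAt (fun t => (1 + C*t) * exp (lam*t)) (C + lam) 0 := by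
    have h1 : HasDerivAt (fun t : ℝ => 1 + C*t) C 0 := (hasDerivAt_cmul C 0).const_add 1
    have h2 := h1.fun_mul (hasDerivAt_exp_mul lam 0)
    simpa using h2
  have hd : C + lam ≤ 0 := by
    apply slope_nonpos hE
    intro t ht
    have h1 := hanti (self_mem_Ici) (mem_Ici.2 ht.le) ht
    rw [hform t ht.le, hform 0 le_rfl] at h1
    simpa using h1
  right
  exact ⟨-lam, C, hCpos.le, by linarith, by linarith, fun t ht => by
    rw [hform t ht, neg_neg]⟩

lemma finish_twoexp {D : ℝ → ℝ} (hD0 : D 0 = 1) (hpos : ∀ t, 0 ≤ t → 0 < D t)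
    (hanti : StrictAntiOn D (Ici 0)) (htend : Tendsto D atTop (𝓝 0))
    {A B l₁ l₂ : ℝ} (hl : l₂ < l₁)
    (hform : ∀ t, 0 ≤ t → D t = A * exp (l₁*t) + B * exp (l₂*t)) : Concl D := by
  have hAB : A + B = 1 := by
    have := hform 0 le_rfl; rw [hD0] at this; simpa using this.symm
  rcases eq_or_ne A 0 with hA | hA
  · exact finish_exp hD0 htend (K := B) (lam := l₂)
      (fun t ht => by rw [hform t ht, hA]; ring)
  rcases eq_or_ne B 0 with hB | hB
  · exact finish_exp hD0 htend (K := A) (lam := l₁)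
      (fun t ht => by rw [hform t ht, hB]; ring)
  have h2 : Tendsto (fun t => exp (-((l₁-l₂)*t))) atTop (𝓝 0) :=
    Real.tendsto_exp_neg_atTop_nhds_zero.comp (tendsto_id.const_mul_atTop (by linarith))
  have htend2 : Tendsto (fun t => D t * exp (-(l₁*t))) atTop (𝓝 A) := by
    have h3 : Tendsto (fun t => A + B * exp (-((l₁-l₂)*t))) atTop (𝓝 A) := by
      have := (h2.const_mul B).const_add A
      simpa using this
    apply h3.congr'
    filter_upwards [eventually_ge_atTop (0:ℝ)] with t ht
    rw [hform t ht, add_mul, mul_assoc, mul_assoc, ← exp_add, ← exp_add,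
      show l₁*t + -(l₁*t) = 0 by ring, show l₂*t + -(l₁*t) = -((l₁ - l₂)*t) by ring,
      exp_zero, mul_one]
  have hl₁ : l₁ < 0 := by
    by_contra h
    push_neg at h
    have hz : Tendsto (fun t => D t * exp (-(l₁*t))) atTop (𝓝 0) := by
      apply tendsto_of_tendsto_of_tendsto_of_le_of_le' tendsto_const_nhds htend
      · filter_upwards [eventually_ge_atTop (0:ℝ)] with t ht
        exact mul_nonneg (hpos t ht).le (exp_pos _).le
      · filter_upwards [eventually_ge_atTop (0:ℝ)] with t ht
        have h4 : exp (-(l₁*t)) ≤ 1 := by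
          rw [exp_le_one_iff]
          simp only [neg_nonpos]
          exact mul_nonneg h ht
        nlinarith [(hpos t ht).le, (hpos t ht)]
    exact hA (tendsto_nhds_unique htend2 hz)
  have hApos : 0 < A := by
    have h0 : 0 ≤ A := by
      apply ge_of_tendsto htend2
      filter_upwards [eventually_ge_atTop (0:ℝ)] with t ht
      exact mul_nonneg (hpos t ht).le (exp_pos _).le
    exact lt_of_le_of_ne h0 (Ne.symm hA)
  have hE : HasDerivAt (fun t => A * exp (l₁*t) + B * exp (l₂*t)) (A*l₁ + B*l₂) 0 := by
    have h1 := ((hasDerivAt_exp_mul l₁ 0).const_mul A).fun_add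
      ((hasDerivAt_exp_mul l₂ 0).const_mul B)
    simpa [mul_comm] using h1
  have hd : A*l₁ + B*l₂ ≤ 0 := by
    apply slope_nonpos hE
    intro t ht
    have h1 := hanti (self_mem_Ici) (mem_Ici.2 ht.le) ht
    rw [hform t ht.le, hform 0 le_rfl] at h1
    simpa using h1
  left
  have hc : (0:ℝ) < l₁ - l₂ := by linarith
  refine ⟨A, -l₁, l₁ - l₂, hApos, by linarith, hc, ?_, ?_⟩
  · rw [div_add' _ _ _ hc.ne', le_div_iff₀ hc]
    have hB' : B = 1 - A := by linarith
    nlinarith [hd, hB']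
  · intro t ht
    rw [hform t ht]
    have e1 : -(-l₁) * t = l₁ * t := by ring
    have e2 : -(-l₁ + (l₁ - l₂)) * t = l₂ * t := by ring
    rw [e1, e2]
    have hB' : (1 : ℝ) - A = B := by linarith
    rw [hB']


section Main
variable {D : ℝ → ℝ} {τ₀ σb : ℝ}

lemma ext12 (hOS : ExtOneSwitch D) (hD0 : D 0 = 1) (hpos : ∀ t, 0 ≤ t → 0 < D t)
    (hτ : 0 < τ₀) (hσb : 0 < σb) (hW : D (τ₀+σb) ≠ D τ₀ * D σb)
    (hspan : ∀ t σ, 0 ≤ t → 0 ≤ σ → D (t+σ) = pF D τ₀ σb t * D σ + qF D τ₀ σb t * D (τ₀+σ)) :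
    ∃ u₁ u₂ : ℝ, ∀ t, 0 ≤ t → D t = u₁ * D (t+1) + u₂ * D (t+2) := by
  have hdet12 := two_point hOS hD0 hpos hτ hσb hW (x := 1) (y := 2) (by norm_num) (by norm_num)
  refine ⟨(D (τ₀+2) - D τ₀ * D 2)/(D 1 * D (τ₀+2) - D 2 * D (τ₀+1)),
    (D τ₀ * D 1 - D (τ₀+1))/(D 1 * D (τ₀+2) - D 2 * D (τ₀+1)), fun t ht => ?_⟩
  have e1 := hspan t 1 ht (by norm_num)
  have e2 := hspan t 2 ht (by norm_num)
  have e0 := hspan t 0 ht le_rfl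
  simp only [add_zero, hD0, mul_one] at e0
  rw [e0, e1, e2]
  rw [div_mul_eq_mul_div, div_mul_eq_mul_div, ← add_div, eq_div_iff hdet12]
  ring
end Main

theorem one_switch_discount_representation (D : ℝ → ℝ) (hD : IsDiscount D)
    (hcont : ContinuousOn D (Set.Ici 0)) (hOS : ExtOneSwitch D) :
    ((∃ a b c : ℝ, 0 < a ∧ 0 < b ∧ 0 < c ∧ a ≤ b / c + 1 ∧
        ∀ t, 0 ≤ t → D t = a * Real.exp (-b * t) + (1 - a) * Real.exp (-(b + c) * t)) ∨
     (∃ r c : ℝ, 0 ≤ c ∧ c ≤ r ∧ 0 < r ∧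
        ∀ t, 0 ≤ t → D t = (1 + c * t) * Real.exp (-r * t))) := by
  obtain ⟨hD0, hpos, hanti, htend⟩ := hD
  change Concl D
  by_cases hdim : ∀ t σ, 0 ≤ t → 0 ≤ σ → D (t+σ) = D t * D σ
  · -- multiplicative case
    obtain ⟨c₁, hrep1⟩ := rep_dim1 hcont hpos hdim
    obtain ⟨dD, _, hdD, _⟩ := diff_of_rep (c₂ := 0) (y₁ := 0) (y₂ := 0) hcont one_pos
      le_rfl le_rfl (fun t ht => by
        simp only [add_zero, zero_mul]
        exact hrep1 t ht)
    have hD1 : 0 < D 1 := hpos 1 one_pos.le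
    have hps : ∀ t σ, 0 < t → 0 ≤ σ → dD (t+σ) = dD t * D σ := by
      intro t σ ht hσ
      have hf : HasDerivAt (fun u => D (u+σ)) (dD (t+σ)) t :=
        hasDerivAt_shift (hdD (t+σ) (by linarith))
      have hg : HasDerivAt (fun u => D u * D σ) (dD t * D σ) t := (hdD t ht).mul_const _
      have hfg : (fun u => D (u+σ)) =ᶠ[nhds t] (fun u => D u * D σ) := by
        filter_upwards [Ici_mem_nhds ht] with u hu
        exact hdim u σ hu hσ
      exact hf.unique (hg.congr_of_eventuallyEq hfg)
    set lam := dD 1 / D 1 with hlam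
    have hfo : ∀ u, 1 ≤ u → HasDerivAt D (lam * D u) u := by
      intro u hu
      have h1 := hps 1 (u-1) one_pos (by linarith)
      rw [show (1:ℝ) + (u-1) = u by ring] at h1
      have h2 := hdim 1 (u-1) one_pos.le (by linarith)
      rw [show (1:ℝ) + (u-1) = u by ring] at h2
      have h3 : dD u = lam * D u := by
        rw [h1, h2, hlam]
        field_simp
      have := hdD u (by linarith)
      rwa [h3] at this
    have hsol := solve_linear (contOn_of_hasDeriv hfo) (fun t ht => hfo t ht.le)
    apply finish_exp hD0 htend
      (K := (D 1 * exp (-(lam * 1))) * exp lam / D 1) (lam := lam)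
    intro t ht
    have h4 := hdim t 1 ht one_pos.le
    have h5 := hsol (t+1) (by linarith)
    rw [h5, show lam * (t+1) = lam * t + lam by ring, exp_add] at h4
    field_simp at h4 ⊢
    nlinarith [h4]
  · push_neg at hdim
    obtain ⟨τ₀, σb, hτ0, hσb0, hW⟩ := hdim
    have hτ : 0 < τ₀ := by
      rcases eq_or_lt_of_le hτ0 with h | h
      · exfalso; apply hW; rw [← h, zero_add, hD0, one_mul]
      · exact h
    have hσb : 0 < σb := by
      rcases eq_or_lt_of_le hσb0 with h | h
      · exfalso; apply hW; rw [← h, add_zero, hD0, mul_one]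
      · exact h
    have hdet : D (τ₀+σb) - D τ₀ * D σb ≠ 0 := sub_ne_zero.2 hW
    have hspan := span hOS hD0 hpos hτ hσb hW
    obtain ⟨ε, c₁, c₂, hε, hrep⟩ := rep_of_span hcont hD0 hτ hσb hdet hspan
    obtain ⟨dD, ddD, hdD, hddD⟩ := diff_of_rep (y₁ := 0) (y₂ := σb) hcont hε
      le_rfl hσb.le (fun t ht => by
        simp only [add_zero]
        exact hrep t ht)
    have hrel : ∀ t σ, 0 < t → 0 ≤ σ → D (t+σ) =
        ((D t * D (τ₀+σb) - D (t+σb) * D τ₀)/(D (τ₀+σb) - D τ₀ * D σb)) * D σ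
        + ((D (t+σb) - D t * D σb)/(D (τ₀+σb) - D τ₀ * D σb)) * D (τ₀+σ) := by
      intro t σ ht hσ
      have := hspan t σ ht.le hσ
      simpa [pF, qF] using this
    have S1 := deriv_step (A := D) (B := fun σ => D (τ₀+σ)) hσb.le hdD hrel
    have S2 := deriv_step (A := D) (B := fun σ => D (τ₀+σ)) hσb.le hddD S1
    set K1 := D (τ₀+σb) with hK1
    set K2 := D τ₀ with hK2
    set K3 := D σb with hK3
    set dt := D (τ₀+σb) - D τ₀ * D σb with hdt
    set p0 := (D 1 * K1 - D (1+σb) * K2)/dt with hp0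
    set q0 := (D (1+σb) - D 1 * K3)/dt with hq0
    set p1 := (dD 1 * K1 - dD (1+σb) * K2)/dt with hp1
    set q1 := (dD (1+σb) - dD 1 * K3)/dt with hq1
    set p2 := (ddD 1 * K1 - ddD (1+σb) * K2)/dt with hp2
    set q2 := (ddD (1+σb) - ddD 1 * K3)/dt with hq2
    have h0 : ∀ σ, 0 ≤ σ → D (1+σ) = p0 * D σ + q0 * D (τ₀+σ) :=
      fun σ hσ => hrel 1 σ one_pos hσ
    have h1 : ∀ σ, 0 ≤ σ → dD (1+σ) = p1 * D σ + q1 * D (τ₀+σ) :=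
      fun σ hσ => S1 1 σ one_pos hσ
    have h2 : ∀ σ, 0 ≤ σ → ddD (1+σ) = p2 * D σ + q2 * D (τ₀+σ) :=
      fun σ hσ => S2 1 σ one_pos hσ
    obtain ⟨u₁, u₂, hext⟩ := ext12 hOS hD0 hpos hτ hσb hW hspan
    by_cases hcross : p0 * q1 - q0 * p1 = 0
    · -- first order case
      have hnz : ¬ (p0 = 0 ∧ q0 = 0) := by
        rintro ⟨ha, hb⟩
        have := h0 0 le_rfl
        rw [ha, hb] at this
        simp at this
        have := hpos 1 one_pos.le
        linarith
      have hsum2 : 0 < p0^2 + q0^2 := by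
        rcases not_and_or.1 hnz with h | h
        · have : 0 < p0^2 := by positivity
          nlinarith [sq_nonneg q0]
        · have : 0 < q0^2 := by positivity
          nlinarith [sq_nonneg p0]
      set lam := (p1*p0 + q1*q0)/(p0^2+q0^2) with hlamdef
      have hP : p1 = lam * p0 := by
        rw [hlamdef]
        field_simp
        linear_combination (-q0) * hcross
      have hQ : q1 = lam * q0 := by
        rw [hlamdef]
        field_simp
        linear_combination p0 * hcross
      have hfo : ∀ u, 1 ≤ u → HasDerivAt D (lam * D u) u := by
        intro u hu
        have e1 := h1 (u-1) (by linarith)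
        have e0 := h0 (u-1) (by linarith)
        rw [show (1:ℝ) + (u-1) = u by ring] at e1 e0
        have h3 : dD u = lam * D u := by rw [e1, e0, hP, hQ]; ring
        have := hdD u (by linarith)
        rwa [h3] at this
      have hsol := solve_linear (contOn_of_hasDeriv hfo) (fun t ht => hfo t ht.le)
      apply finish_exp hD0 htend
        (K := (D 1 * exp (-(lam * 1))) * (u₁ * exp lam + u₂ * exp (2*lam))) (lam := lam)
      intro t ht
      rw [hext t ht, hsol (t+1) (by linarith), hsol (t+2) (by linarith),
        show lam * (t+1) = lam * t + lam by ring,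
        show lam * (t+2) = lam * t + 2*lam by ring, exp_add, exp_add]
      ring
    · -- second order case
      set c0 := p1*q2 - q1*p2 with hc0
      set cc1 := p2*q0 - q2*p0 with hcc1
      set c2 := p0*q1 - q0*p1 with hc2
      set al := -cc1/c2 with hal
      set be := -c0/c2 with hbe
      have hODE : ∀ u, 1 ≤ u → ddD u = al * dD u + be * D u := by
        intro u hu
        have e0 := h0 (u-1) (by linarith)
        have e1 := h1 (u-1) (by linarith)
        have e2 := h2 (u-1) (by linarith)
        rw [show (1:ℝ) + (u-1) = u by ring] at e0 e1 e2
        have hA : al * p1 + be * p0 = p2 := by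
          rw [hal, hbe, hc0, hcc1, hc2]
          rw [div_mul_eq_mul_div (-(p2*q0 - q2*p0)) _ p1, div_mul_eq_mul_div (-(p1*q2 - q1*p2)) _ p0, ← add_div, div_eq_iff hcross]
          ring
        have hB : al * q1 + be * q0 = q2 := by
          rw [hal, hbe, hc0, hcc1, hc2]
          rw [div_mul_eq_mul_div (-(p2*q0 - q2*p0)) _ q1, div_mul_eq_mul_div (-(p1*q2 - q1*p2)) _ q0, ← add_div, div_eq_iff hcross]
          ring
        rw [e2, e1, e0, ← hA, ← hB]
        ring
      have hDd1 : ∀ u, 1 ≤ u → HasDerivAt D (dD u) u := fun u hu => hdD u (by linarith)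
      have hDd2 : ∀ u, 1 ≤ u → HasDerivAt dD (al * dD u + be * D u) u := by
        intro u hu
        have := hddD u (by linarith)
        rwa [hODE u hu] at this
      rcases lt_or_ge (al^2 + 4*be) 0 with hdisc | hdisc
      · exact absurd (osc_contra hdisc (fun u hu => hpos u (by linarith)) hDd1 hDd2) not_false
      · rcases second_order_real hdisc hDd1 hDd2 with
          ⟨A, B, l₁, l₂, hl, hform1⟩ | ⟨A, B, lam, hform1⟩
        · apply finish_twoexp hD0 hpos hanti htend hl
            (A := A * (u₁ * exp l₁ + u₂ * exp (2*l₁)))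
            (B := B * (u₁ * exp l₂ + u₂ * exp (2*l₂)))
          intro t ht
          rw [hext t ht, hform1 (t+1) (by linarith), hform1 (t+2) (by linarith),
            show l₁ * (t+1) = l₁ * t + l₁ by ring, show l₁ * (t+2) = l₁ * t + 2*l₁ by ring,
            show l₂ * (t+1) = l₂ * t + l₂ by ring, show l₂ * (t+2) = l₂ * t + 2*l₂ by ring,
            exp_add, exp_add, exp_add, exp_add]
          ring
        · apply finish_poly hD0 hpos hanti htend
            (A := u₁ * (A+B) * exp lam + u₂ * (A+2*B) * exp (2*lam))
            (C := B * (u₁ * exp lam + u₂ * exp (2*lam))) (lam := lam)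
          intro t ht
          rw [hext t ht, hform1 (t+1) (by linarith), hform1 (t+2) (by linarith),
            show lam * (t+1) = lam * t + lam by ring,
            show lam * (t+2) = lam * t + 2*lam by ring, exp_add, exp_add]
          ring
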